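/- Let X be a Delone set in ℝ^d with parameters (r,R). Then for any two points x, x' ∈ X there exist m ∈ ℕ with m ≤ ((2R)⁻¹ + r⁻¹)·‖x − x'‖ and a chain of points x = x₀, x₁, …, x_m = x' all belonging to X such that ‖x_i − x_{i−1}‖ ≤ 4R for every i = 1, …, m. -/

import Mathlib

noncomputable section

/-- `X` is uniformly discrete with parameter `r`: distinct points are at distance `≥ 2r`. -/
def UnifDiscrete {d : ℕ} (X : Set (EuclideanSpace ℝ (Fin d))) (r : ℝ) : Prop :=
  ∀ x ∈ X, ∀ y ∈ X, x ≠ y → 2 * r ≤ dist x y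

/-- `X` is relatively dense with parameter `R`: every closed ball of radius `R` meets `X`. -/
def RelDense {d : ℕ} (X : Set (EuclideanSpace ℝ (Fin d))) (R : ℝ) : Prop :=
  ∀ z : EuclideanSpace ℝ (Fin d), ∃ x ∈ X, dist z x ≤ R

/-- For a Delone set with parameters `(r,R)`, any two points `x, x' ∈ X` can be joined by a
chain of points of `X` with steps of length at most `4R`, whose number of steps `m` is at most
`((2R)⁻¹ + r⁻¹)·‖x − x'‖`. -/
theorem delone_chain {d : ℕ} (X : Set (EuclideanSpace ℝ (Fin d))) (r R : ℝ)
    (hr : 0 < r) (hR : 0 < R) (hud : UnifDiscrete X r) (hrd : RelDense X R) :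
    ∀ x ∈ X, ∀ x' ∈ X, ∃ (m : ℕ) (c : ℕ → EuclideanSpace ℝ (Fin d)),
      (m : ℝ) ≤ ((2 * R)⁻¹ + r⁻¹) * ‖x - x'‖ ∧
      c 0 = x ∧ c m = x' ∧ (∀ i ≤ m, c i ∈ X) ∧
      (∀ i, 1 ≤ i → i ≤ m → ‖c i - c (i - 1)‖ ≤ 4 * R) := by
  intro x hx x' hx'
  by_cases hxx : x = x'
  · refine ⟨0, fun _ => x, ?_, rfl, by simp [hxx], ?_, ?_⟩
    · simp [hxx]
    · intro i hi
      interval_cases i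
      exact hx
    · intro i h1 h0; omega
  · have hL : 0 < ‖x - x'‖ := by
      simpa [sub_eq_zero] using hxx
    set L := ‖x - x'‖ with hLdef
    have h2rL : 2 * r ≤ L := by
      have := hud x hx x' hx' hxx
      rwa [dist_eq_norm] at this
    set m := ⌈L / (2 * R)⌉₊ with hmdef
    have hm0 : 0 < m := Nat.ceil_pos.2 (by positivity)
    have hm0' : (0:ℝ) < (m:ℝ) := by exact_mod_cast hm0
    have hmR : L / (2 * R) ≤ (m:ℝ) := Nat.le_ceil _
    have hLm : L / (m:ℝ) ≤ 2 * R := by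
      rw [div_le_iff₀ hm0']
      have h1 : L = (L / (2 * R)) * (2 * R) := by field_simp
      nlinarith [hmR]
    have hmbound : (m:ℝ) ≤ ((2 * R)⁻¹ + r⁻¹) * L := by
      have h1 : (m:ℝ) < L / (2 * R) + 1 := Nat.ceil_lt_add_one (by positivity)
      have h2 : 1 ≤ r⁻¹ * L := by
        rw [le_inv_mul_iff₀ hr, mul_one]
        linarith
      have : L / (2 * R) = (2 * R)⁻¹ * L := by ring
      nlinarith
    set z : ℕ → EuclideanSpace ℝ (Fin d) := fun i => x + ((i:ℝ)/(m:ℝ)) • (x' - x) with hzdef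
    have hz0 : z 0 = x := by simp [hzdef]
    have hzm : z m = x' := by
      simp only [hzdef, div_self hm0'.ne', one_smul]
      abel
    set c : ℕ → EuclideanSpace ℝ (Fin d) := fun i =>
      if i = 0 then x else if m ≤ i then x' else Classical.choose (hrd (z i)) with hcdef
    have hcX : ∀ i ≤ m, c i ∈ X := by
      intro i hi
      simp only [hcdef]
      split_ifs with h1 h2
      · exact hx
      · exact hx'
      · exact (Classical.choose_spec (hrd (z i))).1
    have hcz : ∀ j ≤ m, ‖c j - z j‖ ≤ R := by
      intro j hj
      simp only [hcdef]
      split_ifs with h1 h2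
      · subst h1; rw [hz0]; simp [hR.le]
      · have : j = m := le_antisymm hj h2
        subst this
        rw [hzm]; simp [hR.le]
      · have := (Classical.choose_spec (hrd (z j))).2
        rw [dist_eq_norm, norm_sub_rev] at this
        exact this
    have hzstep : ∀ i, 1 ≤ i → i ≤ m → ‖z i - z (i - 1)‖ ≤ 2 * R := by
      intro i h1 him
      have hcast : ((i - 1 : ℕ) : ℝ) = (i:ℝ) - 1 := by
        rw [Nat.cast_sub h1]; norm_num
      have heq : z i - z (i - 1) = ((1:ℝ)/(m:ℝ)) • (x' - x) := by
        simp only [hzdef, hcast]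
        have : (i:ℝ)/(m:ℝ) - ((i:ℝ) - 1)/(m:ℝ) = 1/(m:ℝ) := by
          field_simp
          ring
        rw [show x + ((i:ℝ)/(m:ℝ)) • (x' - x) - (x + (((i:ℝ) - 1)/(m:ℝ)) • (x' - x))
            = ((i:ℝ)/(m:ℝ) - ((i:ℝ) - 1)/(m:ℝ)) • (x' - x) by module, this]
      rw [heq, norm_smul]
      have : ‖(1:ℝ)/(m:ℝ)‖ = 1/(m:ℝ) := by
        rw [Real.norm_eq_abs, abs_of_pos (by positivity)]
      rw [this, norm_sub_rev]
      calc 1/(m:ℝ) * L = L / (m:ℝ) := by ring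
        _ ≤ 2 * R := hLm
    refine ⟨m, c, hmbound, by simp [hcdef], by simp [hcdef, hm0.ne', le_refl], hcX, ?_⟩
    intro i h1 him
    have key : c i - c (i - 1) = (c i - z i) + (z i - z (i - 1)) + (z (i - 1) - c (i - 1)) := by
      abel
    rw [key]
    calc ‖(c i - z i) + (z i - z (i - 1)) + (z (i - 1) - c (i - 1))‖
        ≤ ‖c i - z i‖ + ‖z i - z (i - 1)‖ + ‖z (i - 1) - c (i - 1)‖ := norm_add₃_le
      _ ≤ R + 2 * R + R := by
          have h3 : ‖z (i - 1) - c (i - 1)‖ ≤ R := by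
            rw [norm_sub_rev]; exact hcz _ (by omega)
          have h4 := hcz i him
          have h5 := hzstep i h1 him
          linarith
      _ = 4 * R := by ring
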